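/- arXiv:2405.03965 — 3 statements merged into one kernel-verified Lean document; each statement's English description precedes it below -/
import Mathlib

section
/- Let $b : (0, \infty) \to \mathbb{R}$ be a bounded $C^2$ solution of $(r b'(r))' = 2 r b(r)(e_1^2 f(r)^2 + e_2^2 g(r)^2) - 2 e_2 r g(r)^2$ on $(0, \infty)$, where $e_1, e_2 > 0$ and $f, g$ are continuous with $f(r) = O(r^{N(1-\varepsilon)})$ and $g(r) = O(r^{M(1-\varepsilon)})$ as $r \to 0$ for some $N, M > 0$ and $\varepsilon \in (0,1)$, and suppose $\liminf_{r \to 0^+} r|b'(r)| = 0$. Then $\lim_{r \to 0^+} b(r)$ exists and is finite. -/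
open Set Filter MeasureTheory intervalIntegral

set_option maxHeartbeats 1000000 in
theorem stmt_10 (b f g : ℝ → ℝ) (e₁ e₂ N M ε : ℝ)
    (he₁ : 0 < e₁) (he₂ : 0 < e₂) (hN : 0 < N) (hM : 0 < M) (hε : ε ∈ Set.Ioo (0 : ℝ) 1)
    (hb : ContDiffOn ℝ 2 b (Set.Ioi 0))
    (hbdd : ∃ K : ℝ, ∀ r ∈ Set.Ioi (0 : ℝ), |b r| ≤ K)
    (hf : ContinuousOn f (Set.Ioi 0)) (hg : ContinuousOn g (Set.Ioi 0))
    (heq : ∀ r ∈ Set.Ioi (0 : ℝ),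
      deriv (fun s => s * deriv b s) r =
        2 * r * b r * (e₁ ^ 2 * (f r) ^ 2 + e₂ ^ 2 * (g r) ^ 2) - 2 * e₂ * r * (g r) ^ 2)
    (hfO : ∃ C > (0 : ℝ), ∃ r₀ > (0 : ℝ), ∀ r ∈ Set.Ioo 0 r₀, |f r| ≤ C * r ^ (N * (1 - ε)))
    (hgO : ∃ C > (0 : ℝ), ∃ r₀ > (0 : ℝ), ∀ r ∈ Set.Ioo 0 r₀, |g r| ≤ C * r ^ (M * (1 - ε)))
    (hliminf : Filter.liminf (fun r => r * |deriv b r|) (nhdsWithin 0 (Set.Ioi 0)) = 0) :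
    ∃ C₁ : ℝ, Filter.Tendsto b (nhdsWithin 0 (Set.Ioi 0)) (nhds C₁) := by
  obtain ⟨K, hK⟩ := hbdd
  have hK0 : 0 ≤ K := le_trans (abs_nonneg _) (hK 1 (by norm_num))
  obtain ⟨Cf, hCf, rf, hrf, hfb⟩ := hfO
  obtain ⟨Cg, hCg, rg, hrg, hgb⟩ := hgO
  obtain ⟨hε0, hε1⟩ := hε
  set γ := min (2 * (N * (1 - ε))) (2 * (M * (1 - ε))) with hγdef
  have hα0 : 0 < N * (1 - ε) := mul_pos hN (by linarith)
  have hβ0 : 0 < M * (1 - ε) := mul_pos hM (by linarith)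
  have hγ0 : 0 < γ := lt_min (by linarith) (by linarith)
  set r₀ := min 1 (min rf rg) with hr₀def
  have hr₀ : 0 < r₀ := lt_min one_pos (lt_min hrf hrg)
  have hr₀1 : r₀ ≤ 1 := min_le_left _ _
  set A := 2 * K * (e₁ ^ 2 * Cf ^ 2 + e₂ ^ 2 * Cg ^ 2) + 2 * e₂ * Cg ^ 2 with hAdef
  have hA0 : 0 ≤ A := by positivity
  have hbc : ContinuousOn b (Ioi 0) := hb.continuousOn
  have hb' : ContDiffOn ℝ 1 (deriv b) (Ioi 0) :=
    hb.deriv_of_isOpen isOpen_Ioi (by norm_num)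
  have hb'c : ContinuousOn (deriv b) (Ioi 0) := hb'.continuousOn
  have hb'd : ∀ t ∈ Ioi (0 : ℝ), DifferentiableAt ℝ (deriv b) t := fun t ht =>
    (hb'.contDiffAt (isOpen_Ioi.mem_nhds ht)).differentiableAt one_ne_zero
  have hbd : ∀ t ∈ Ioi (0 : ℝ), HasDerivAt b (deriv b t) t := fun t ht =>
    ((hb.contDiffAt (isOpen_Ioi.mem_nhds ht)).differentiableAt (by norm_num)).hasDerivAt
  set φ : ℝ → ℝ := fun s => s * deriv b s with hφdef
  set RHS : ℝ → ℝ := fun t =>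
    2 * t * b t * (e₁ ^ 2 * (f t) ^ 2 + e₂ ^ 2 * (g t) ^ 2) - 2 * e₂ * t * (g t) ^ 2 with hRHSdef
  have hφd : ∀ t ∈ Ioi (0 : ℝ), HasDerivAt φ (RHS t) t := by
    intro t ht
    have hdiff : DifferentiableAt ℝ φ t := differentiableAt_id.mul (hb'd t ht)
    have h1 := hdiff.hasDerivAt
    rwa [show deriv φ t = RHS t from heq t ht] at h1
  have hRHSc : ContinuousOn RHS (Ioi 0) := by
    apply ContinuousOn.sub
    · exact ((continuousOn_const.mul continuousOn_id).mul hbc).mul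
        ((continuousOn_const.mul (hf.pow 2)).add (continuousOn_const.mul (hg.pow 2)))
    · exact (continuousOn_const.mul continuousOn_id).mul (hg.pow 2)
  -- pointwise bound on RHS
  have hRHSb : ∀ s ∈ Ioo (0 : ℝ) r₀, |RHS s| ≤ A * (s ^ γ * s) := by
    intro s hs
    obtain ⟨hs0, hsr⟩ := hs
    have hs1 : s ≤ 1 := le_trans hsr.le hr₀1
    have hsf : s ∈ Ioo 0 rf := ⟨hs0, lt_of_lt_of_le hsr (le_trans (min_le_right _ _) (min_le_left _ _))⟩
    have hsg : s ∈ Ioo 0 rg := ⟨hs0, lt_of_lt_of_le hsr (le_trans (min_le_right _ _) (min_le_right _ _))⟩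
    have hf2 : (f s) ^ 2 ≤ Cf ^ 2 * s ^ γ := by
      have h1 : (f s) ^ 2 = |f s| ^ 2 := (sq_abs _).symm
      have h2 : |f s| ^ 2 ≤ (Cf * s ^ (N * (1 - ε))) ^ 2 :=
        pow_le_pow_left₀ (abs_nonneg _) (hfb s hsf) 2
      have h3 : (s ^ (N * (1 - ε))) ^ 2 = s ^ (2 * (N * (1 - ε))) := by
        rw [← Real.rpow_natCast (s ^ (N * (1 - ε))) 2, ← Real.rpow_mul hs0.le]
        norm_num; ring_nf
      have h4 : s ^ (2 * (N * (1 - ε))) ≤ s ^ γ :=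
        Real.rpow_le_rpow_of_exponent_ge hs0 hs1 (min_le_left _ _)
      calc (f s) ^ 2 = |f s| ^ 2 := h1
        _ ≤ (Cf * s ^ (N * (1 - ε))) ^ 2 := h2
        _ = Cf ^ 2 * (s ^ (N * (1 - ε))) ^ 2 := by ring
        _ = Cf ^ 2 * s ^ (2 * (N * (1 - ε))) := by rw [h3]
        _ ≤ Cf ^ 2 * s ^ γ := by nlinarith [sq_nonneg Cf]
    have hg2 : (g s) ^ 2 ≤ Cg ^ 2 * s ^ γ := by
      have h1 : (g s) ^ 2 = |g s| ^ 2 := (sq_abs _).symm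
      have h2 : |g s| ^ 2 ≤ (Cg * s ^ (M * (1 - ε))) ^ 2 :=
        pow_le_pow_left₀ (abs_nonneg _) (hgb s hsg) 2
      have h3 : (s ^ (M * (1 - ε))) ^ 2 = s ^ (2 * (M * (1 - ε))) := by
        rw [← Real.rpow_natCast (s ^ (M * (1 - ε))) 2, ← Real.rpow_mul hs0.le]
        norm_num; ring_nf
      have h4 : s ^ (2 * (M * (1 - ε))) ≤ s ^ γ :=
        Real.rpow_le_rpow_of_exponent_ge hs0 hs1 (min_le_right _ _)
      calc (g s) ^ 2 = |g s| ^ 2 := h1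
        _ ≤ (Cg * s ^ (M * (1 - ε))) ^ 2 := h2
        _ = Cg ^ 2 * (s ^ (M * (1 - ε))) ^ 2 := by ring
        _ = Cg ^ 2 * s ^ (2 * (M * (1 - ε))) := by rw [h3]
        _ ≤ Cg ^ 2 * s ^ γ := by nlinarith [sq_nonneg Cg]
    have hsγ : 0 ≤ s ^ γ := Real.rpow_nonneg hs0.le γ
    have hbs : |b s| ≤ K := hK s hs0
    have hf2' : 0 ≤ (f s) ^ 2 := sq_nonneg _
    have hg2' : 0 ≤ (g s) ^ 2 := sq_nonneg _
    have key : |RHS s| ≤ 2 * s * |b s| * (e₁ ^ 2 * (f s) ^ 2 + e₂ ^ 2 * (g s) ^ 2)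
        + 2 * e₂ * s * (g s) ^ 2 := by
      have := abs_sub (2 * s * b s * (e₁ ^ 2 * (f s) ^ 2 + e₂ ^ 2 * (g s) ^ 2))
        (2 * e₂ * s * (g s) ^ 2)
      calc |RHS s| ≤ |2 * s * b s * (e₁ ^ 2 * (f s) ^ 2 + e₂ ^ 2 * (g s) ^ 2)|
            + |2 * e₂ * s * (g s) ^ 2| := abs_sub _ _
        _ = 2 * s * |b s| * (e₁ ^ 2 * (f s) ^ 2 + e₂ ^ 2 * (g s) ^ 2)
            + 2 * e₂ * s * (g s) ^ 2 := by
            rw [abs_mul, abs_mul, abs_of_nonneg (by positivity : (0:ℝ) ≤ 2 * s),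
              abs_of_nonneg (by positivity : (0:ℝ) ≤ e₁ ^ 2 * (f s) ^ 2 + e₂ ^ 2 * (g s) ^ 2),
              abs_of_nonneg (by positivity : (0:ℝ) ≤ 2 * e₂ * s * (g s) ^ 2)]
    calc |RHS s| ≤ 2 * s * |b s| * (e₁ ^ 2 * (f s) ^ 2 + e₂ ^ 2 * (g s) ^ 2)
          + 2 * e₂ * s * (g s) ^ 2 := key
      _ ≤ 2 * s * K * (e₁ ^ 2 * (Cf ^ 2 * s ^ γ) + e₂ ^ 2 * (Cg ^ 2 * s ^ γ))
          + 2 * e₂ * s * (Cg ^ 2 * s ^ γ) := by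
          gcongr
          all_goals first | exact abs_nonneg _ | exact hbs | exact hf2 | exact hg2 | positivity
      _ = A * (s ^ γ * s) := by rw [hAdef]; ring
  -- FTC bound for φ
  have hφftc : ∀ r₁ ∈ Ioo (0:ℝ) r₀, ∀ r₂ ∈ Ioo (0:ℝ) r₀, r₁ ≤ r₂ →
      |φ r₂ - φ r₁| ≤ A * (r₂ ^ γ * r₂) * (r₂ - r₁) := by
    intro r₁ h₁ r₂ h₂ h₁₂
    have hsub : uIcc r₁ r₂ ⊆ Ioi (0:ℝ) := by
      rw [uIcc_of_le h₁₂]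
      intro x hx; exact lt_of_lt_of_le h₁.1 hx.1
    have hint : IntervalIntegrable RHS volume r₁ r₂ :=
      (hRHSc.mono hsub).intervalIntegrable
    have hFTC : ∫ t in r₁..r₂, RHS t = φ r₂ - φ r₁ :=
      integral_eq_sub_of_hasDerivAt (fun t ht => hφd t (hsub ht)) hint
    rw [← hFTC]
    have hb2 : ∀ x ∈ Set.uIoc r₁ r₂, ‖RHS x‖ ≤ A * (r₂ ^ γ * r₂) := by
      intro x hx
      rw [uIoc_of_le h₁₂] at hx
      have hx0 : 0 < x := lt_of_lt_of_le h₁.1 hx.1.le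
      have hxr : x < r₀ := lt_of_le_of_lt hx.2 h₂.2
      have := hRHSb x ⟨hx0, hxr⟩
      have hmono : x ^ γ * x ≤ r₂ ^ γ * r₂ := by
        apply mul_le_mul (Real.rpow_le_rpow hx0.le hx.2 hγ0.le) hx.2
          hx0.le (Real.rpow_nonneg (le_trans hx0.le hx.2) γ)
      calc ‖RHS x‖ = |RHS x| := rfl
        _ ≤ A * (x ^ γ * x) := this
        _ ≤ A * (r₂ ^ γ * r₂) := by nlinarith [Real.rpow_nonneg hx0.le γ]
    calc |∫ t in r₁..r₂, RHS t| ≤ A * (r₂ ^ γ * r₂) * |r₂ - r₁| :=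
        intervalIntegral.norm_integral_le_of_norm_le_const hb2
      _ = A * (r₂ ^ γ * r₂) * (r₂ - r₁) := by rw [abs_of_nonneg (by linarith)]
  -- φ is bounded above near 0 (for coboundedness)
  set c := r₀ / 2 with hcdef
  have hc0 : 0 < c := by positivity
  have hcmem : c ∈ Ioo (0:ℝ) r₀ := ⟨hc0, by rw [hcdef]; linarith⟩
  have hcob : IsCoboundedUnder (· ≥ ·) (nhdsWithin 0 (Set.Ioi 0))
      (fun r => r * |deriv b r|) := by
    apply isCoboundedUnder_ge_of_eventually_le (nhdsWithin 0 (Set.Ioi 0)) (x := |φ c| + A * (c ^ γ * c) * c)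
    filter_upwards [Ioo_mem_nhdsGT hc0] with x hx
    have hxm : x ∈ Ioo (0:ℝ) r₀ := ⟨hx.1, lt_trans hx.2 hcmem.2⟩
    have := hφftc x hxm c hcmem hx.2.le
    have hxφ : x * |deriv b x| = |φ x| := by
      rw [hφdef]; simp [abs_mul, abs_of_pos hx.1]
    rw [hxφ]
    have h1 : |φ x| ≤ |φ c| + |φ c - φ x| := by
      have := abs_sub_abs_le_abs_sub (φ x) (φ c)
      have := abs_sub_comm (φ x) (φ c)
      nlinarith [abs_nonneg (φ x - φ c)]
    have h2 : A * (c ^ γ * c) * (c - x) ≤ A * (c ^ γ * c) * c := by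
      have hnn : (0:ℝ) ≤ A * (c ^ γ * c) :=
        mul_nonneg hA0 (mul_nonneg (Real.rpow_nonneg hc0.le γ) hc0.le)
      exact mul_le_mul_of_nonneg_left (by linarith [hx.1]) hnn
    linarith
  -- key bound on φ near 0
  have hφb : ∀ r ∈ Ioo (0:ℝ) r₀, |φ r| ≤ A * (r ^ γ * r) * r := by
    intro r hr
    refine le_of_forall_pos_le_add ?_
    intro η hη
    have hlt : liminf (fun r => r * |deriv b r|) (nhdsWithin 0 (Set.Ioi 0)) < η := by
      rw [hliminf]; exact hη
    have hfreq : ∃ᶠ x in nhdsWithin 0 (Set.Ioi 0), x * |deriv b x| < η :=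
      frequently_lt_of_liminf_lt hcob hlt
    have hev : ∀ᶠ x in nhdsWithin 0 (Set.Ioi 0), x ∈ Ioo 0 r :=
      Ioo_mem_nhdsGT hr.1
    obtain ⟨r₁, hr₁η, hr₁mem⟩ := (hfreq.and_eventually hev).exists
    have hr₁m : r₁ ∈ Ioo (0:ℝ) r₀ := ⟨hr₁mem.1, lt_trans hr₁mem.2 hr.2⟩
    have hdiff := hφftc r₁ hr₁m r hr hr₁mem.2.le
    have hφr₁ : |φ r₁| < η := by
      rw [hφdef]; simpa [abs_mul, abs_of_pos hr₁mem.1] using hr₁η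
    have h1 : |φ r| ≤ |φ r - φ r₁| + |φ r₁| := by
      have := abs_sub_abs_le_abs_sub (φ r) (φ r₁)
      nlinarith [abs_nonneg (φ r₁)]
    have h2 : A * (r ^ γ * r) * (r - r₁) ≤ A * (r ^ γ * r) * r := by
      have hnn : (0:ℝ) ≤ A * (r ^ γ * r) :=
        mul_nonneg hA0 (mul_nonneg (Real.rpow_nonneg hr.1.le γ) hr.1.le)
      nlinarith [hr₁mem.1]
    linarith
  -- deriv b is bounded near 0
  have hderb : ∀ r ∈ Ioo (0:ℝ) r₀, |deriv b r| ≤ A := by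
    intro r hr
    have := hφb r hr
    have hφeq : |φ r| = r * |deriv b r| := by
      rw [hφdef]; simp [abs_mul, abs_of_pos hr.1]
    rw [hφeq] at this
    have hrγ : r ^ γ ≤ 1 :=
      Real.rpow_le_one hr.1.le (le_trans hr.2.le hr₀1) hγ0.le
    have hr1 : r ≤ 1 := le_trans hr.2.le hr₀1
    have h1 : r * |deriv b r| ≤ A * r := by
      have hle1 : r ^ γ * r ≤ 1 := by
        have := mul_le_mul hrγ hr1 hr.1.le zero_le_one
        linarith
      calc r * |deriv b r| ≤ A * (r ^ γ * r) * r := this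
        _ = (A * r) * (r ^ γ * r) := by ring
        _ ≤ (A * r) * 1 := mul_le_mul_of_nonneg_left hle1 (mul_nonneg hA0 hr.1.le)
        _ = A * r := mul_one _
    have := (mul_le_mul_iff_right₀ hr.1).mp (by linarith [h1] : r * |deriv b r| ≤ r * A)
    linarith
  -- integrability of deriv b on Ioc 0 c
  have hmeas : AEStronglyMeasurable (deriv b) (volume.restrict (Ioc 0 c)) := by
    apply ContinuousOn.aestronglyMeasurable (hb'c.mono ?_) measurableSet_Ioc
    intro x hx; exact hx.1
  have hintc : IntegrableOn (deriv b) (Ioc 0 c) := by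
    apply Integrable.mono' (g := fun _ => A)
    · exact integrableOn_const measure_Ioc_lt_top.ne
    · exact hmeas
    · filter_upwards [ae_restrict_mem measurableSet_Ioc] with x hx
      exact hderb x ⟨hx.1, lt_of_le_of_lt hx.2 hcmem.2⟩
  -- FTC for b
  have hbftc : ∀ r ∈ Ioo (0:ℝ) c, b c - b r = ∫ t in Ioc r c, deriv b t := by
    intro r hr
    have hsub : uIcc r c ⊆ Ioi (0:ℝ) := by
      rw [uIcc_of_le hr.2.le]
      intro x hx; exact lt_of_lt_of_le hr.1 hx.1
    have hint : IntervalIntegrable (deriv b) volume r c :=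
      (hb'c.mono hsub).intervalIntegrable
    have := integral_eq_sub_of_hasDerivAt (fun t ht => hbd t (hsub ht)) hint
    rw [← this, intervalIntegral.integral_of_le hr.2.le]
  set C₁ := b c - ∫ t in Ioc 0 c, deriv b t with hC₁def
  refine ⟨C₁, ?_⟩
  have hsplit : ∀ r ∈ Ioo (0:ℝ) c, b r - C₁ = ∫ t in Ioc 0 r, deriv b t := by
    intro r hr
    have hunion : Ioc (0:ℝ) r ∪ Ioc r c = Ioc 0 c := Ioc_union_Ioc_eq_Ioc hr.1.le hr.2.le
    have hdisj : Disjoint (Ioc (0:ℝ) r) (Ioc r c) := Ioc_disjoint_Ioc_of_le le_rfl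
    have hi1 : IntegrableOn (deriv b) (Ioc 0 r) := hintc.mono_set (by
      intro x hx; exact ⟨hx.1, le_trans hx.2 hr.2.le⟩)
    have hi2 : IntegrableOn (deriv b) (Ioc r c) := hintc.mono_set (by
      intro x hx; exact ⟨lt_trans hr.1 hx.1, hx.2⟩)
    have := setIntegral_union hdisj measurableSet_Ioc hi1 hi2 (f := deriv b) (μ := volume)
    rw [hunion] at this
    have hb1 := hbftc r hr
    rw [hC₁def, this]
    linarith
  -- squeeze
  have hbound : ∀ᶠ r in nhdsWithin 0 (Set.Ioi 0), |b r - C₁| ≤ A * r := by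
    filter_upwards [Ioo_mem_nhdsGT hc0] with r hr
    rw [hsplit r hr]
    have h1 : ‖∫ t in Ioc 0 r, deriv b t‖ ≤ A * (volume (Ioc 0 r)).toReal := by
      apply norm_setIntegral_le_of_norm_le_const measure_Ioc_lt_top
      intro x hx
      exact hderb x ⟨hx.1, lt_of_le_of_lt hx.2 (lt_trans hr.2 hcmem.2)⟩
    rw [Real.volume_Ioc, ENNReal.toReal_ofReal (by linarith [hr.1] : (0:ℝ) ≤ r - 0)] at h1
    simpa using h1
  have htends : Tendsto (fun r : ℝ => A * r) (nhdsWithin 0 (Set.Ioi 0)) (nhds 0) := by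
    have : Tendsto (fun r : ℝ => A * r) (nhds 0) (nhds (A * 0)) :=
      (continuous_const.mul continuous_id).tendsto 0
    rw [mul_zero] at this
    exact this.mono_left nhdsWithin_le_nhds
  have habs : Tendsto (fun r => |b r - C₁|) (nhdsWithin 0 (Set.Ioi 0)) (nhds 0) :=
    squeeze_zero' (Eventually.of_forall fun r => abs_nonneg _) hbound htends
  have hsub : Tendsto (fun r => b r - C₁) (nhdsWithin 0 (Set.Ioi 0)) (nhds 0) := by
    exact (tendsto_zero_iff_abs_tendsto_zero _).mpr habs
  have := hsub.add_const C₁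
  simpa using this
end

section
/- Let $e_1 > 0$ and suppose $a \in C^2((0,\infty))$ satisfies, for all sufficiently large $r$, $\left(\frac{a'(r)}{r}\right)' < \frac{e_1^2}{r}\left(a(r) - \frac{1}{e_1}\right)$, together with $0 \leq a(r) \leq 1/e_1$ for all $r$, and $\liminf_{r \to \infty} \frac{|a'(r)|}{r} = 0$. Then there exists $R > 0$ such that $a'(r) > 0$ for all $r \geq R$, and $a(r)$ converges to a limit $a_\infty \in [0, 1/e_1]$ as $r \to \infty$. -/
open Filter Set

theorem stmt_17 (e₁ : ℝ) (he₁ : 0 < e₁) (a : ℝ → ℝ)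
    (ha : ContDiff ℝ 2 a)
    (hineq : ∃ R₀ > (0 : ℝ), ∀ r ≥ R₀,
      deriv (fun s => deriv a s / s) r < e₁ ^ 2 / r * (a r - 1 / e₁))
    (hbdd : ∀ r > (0 : ℝ), a r ∈ Set.Icc 0 (1 / e₁))
    (hliminf : Filter.liminf (fun r => |deriv a r| / r) Filter.atTop = 0) :
    (∃ R > (0 : ℝ), ∀ r ≥ R, 0 < deriv a r) ∧
    ∃ aInf ∈ Set.Icc (0 : ℝ) (1 / e₁), Filter.Tendsto a Filter.atTop (nhds aInf) := by
  obtain ⟨R₀, hR₀, hineq⟩ := hineq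
  have hadiff : Differentiable ℝ a := ha.differentiable (by norm_num)
  have hda : Continuous (deriv a) :=
    (contDiff_one_iff_deriv.mp (ha.of_le (by norm_num))).2
  set g : ℝ → ℝ := fun s => deriv a s / s with hgdef
  have hug : ∀ r : ℝ, 0 < r → |g r| = |deriv a r| / r := by
    intro r hr
    rw [hgdef]
    simp [abs_div, abs_of_pos hr]
  -- g is strictly decreasing on [R₀, ∞)
  have hganti : StrictAntiOn g (Set.Ici R₀) := by
    apply strictAntiOn_of_deriv_neg (convex_Ici R₀)
    · exact (hda.continuousOn).div continuousOn_id
        (fun x hx => (hR₀.trans_le hx).ne')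
    · intro r hr
      rw [interior_Ici] at hr
      have hrpos : (0:ℝ) < r := hR₀.trans hr
      have h1 := hineq r hr.le
      have h2 : e₁ ^ 2 / r * (a r - 1 / e₁) ≤ 0 :=
        mul_nonpos_iff.mpr (Or.inl ⟨by positivity, by linarith [(hbdd r hrpos).2]⟩)
      linarith
  -- g is positive on [R₀, ∞)
  have hgpos : ∀ r ≥ R₀, 0 < g r := by
    by_cases htop : ∀ b : ℝ, ∀ᶠ r in atTop, b ≤ |deriv a r| / r
    · -- then |g| → ∞, hence g → -∞ since g is decreasing; contradiction with a ≥ 0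
      exfalso
      have hM : ∀ᶠ r in atTop, max (g R₀) 0 + 1 ≤ |deriv a r| / r := htop _
      obtain ⟨r₂, hr₂⟩ := (hM.and (eventually_ge_atTop (max R₀ 1))).exists
      obtain ⟨hMr₂, hr₂ge⟩ := hr₂
      have hr₂R₀ : R₀ ≤ r₂ := le_trans (le_max_left _ _) hr₂ge
      have hr₂1 : (1:ℝ) ≤ r₂ := le_trans (le_max_right _ _) hr₂ge
      have hr₂pos : (0:ℝ) < r₂ := lt_of_lt_of_le one_pos hr₂1
      rw [← hug r₂ hr₂pos] at hMr₂
      have hgR₀ : g r₂ ≤ g R₀ := by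
        rcases eq_or_lt_of_le hr₂R₀ with h | h
        · rw [h]
        · exact le_of_lt (hganti (self_mem_Ici) (mem_Ici.mpr hr₂R₀) h)
      have hgneg : g r₂ ≤ -1 := by
        rcases abs_cases (g r₂) with ⟨h1, h2⟩ | ⟨h1, h2⟩
        · exfalso
          have := le_max_left (g R₀) 0
          linarith
        · have := le_max_right (g R₀) 0
          linarith
      -- for all s ≥ r₂, deriv a s ≤ -1
      have hda_neg : ∀ s ≥ r₂, deriv a s ≤ -1 := by
        intro s hs
        have hspos : (0:ℝ) < s := lt_of_lt_of_le hr₂pos hs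
        have hgs : g s ≤ -1 := by
          rcases eq_or_lt_of_le hs with h | h
          · rw [← h]; exact hgneg
          · exact le_trans
              (le_of_lt (hganti (mem_Ici.mpr hr₂R₀) (mem_Ici.mpr (hr₂R₀.trans hs.le)) h))
              hgneg
        have : deriv a s = g s * s := by
          rw [hgdef]; field_simp
        rw [this]
        calc g s * s ≤ (-1) * s := by
              apply mul_le_mul_of_nonneg_right hgs hspos.le
          _ ≤ -1 := by nlinarith
      -- φ := a + id is antitone on [r₂, ∞)
      have hφanti : AntitoneOn (fun s => a s + s) (Set.Ici r₂) := by
        apply antitoneOn_of_deriv_nonpos (convex_Ici r₂)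
          ((hadiff.continuous.add continuous_id').continuousOn)
        · intro s hs
          exact ((hadiff s).add differentiableAt_fun_id).differentiableWithinAt
        · intro s hs
          rw [interior_Ici] at hs
          rw [deriv_add (hadiff s) differentiableAt_fun_id]
          simp only [deriv_id'']
          linarith [hda_neg s hs.le]
      set t : ℝ := r₂ + a r₂ + 1 with htdef
      have har₂ : 0 ≤ a r₂ := (hbdd r₂ hr₂pos).1
      have htge : r₂ ≤ t := by rw [htdef]; linarith
      have htpos : (0:ℝ) < t := lt_of_lt_of_le hr₂pos htge
      have := hφanti (self_mem_Ici) (mem_Ici.mpr htge) htge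
      have hat : 0 ≤ a t := (hbdd t htpos).1
      simp only at this
      rw [htdef] at this
      linarith
    · -- cobounded case: the standard argument
      push_neg at htop
      obtain ⟨b, hb⟩ := htop
      have hco : IsCoboundedUnder (· ≥ ·) atTop (fun r => |deriv a r| / r) :=
        IsCoboundedUnder.of_frequently_le (hb.mono fun r hr => le_of_lt hr)
      intro r hr
      by_contra hle
      push_neg at hle
      have hlt : g (r+1) < g r :=
        hganti (mem_Ici.mpr hr) (mem_Ici.mpr (by linarith)) (lt_add_one r)
      have hc : 0 < -(g (r+1)) := by linarith
      have hfreq : ∃ᶠ s in atTop, |deriv a s| / s < -(g (r+1)) :=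
        frequently_lt_of_liminf_lt hco (by rw [hliminf]; exact hc)
      have hev : ∀ᶠ s in atTop, -(g (r+1)) ≤ |deriv a s| / s := by
        filter_upwards [eventually_ge_atTop (max (r+1) 1)] with s hs
        have hs1 : r + 1 ≤ s := le_trans (le_max_left _ _) hs
        have hspos : (0:ℝ) < s := lt_of_lt_of_le one_pos (le_trans (le_max_right _ _) hs)
        have hgs : g s ≤ g (r+1) := by
          rcases eq_or_lt_of_le hs1 with h | h
          · rw [← h]
          · exact le_of_lt (hganti (mem_Ici.mpr (by linarith)) (mem_Ici.mpr (by linarith)) h)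
        rw [← hug s hspos]
        calc -(g (r+1)) ≤ -(g s) := by linarith
          _ ≤ |g s| := neg_le_abs _
      obtain ⟨s, hcs, hsc⟩ := (hfreq.and_eventually hev).exists
      linarith
  have hderiv_pos : ∀ r ≥ R₀, 0 < deriv a r := by
    intro r hr
    have hrpos : (0:ℝ) < r := hR₀.trans_le hr
    have := mul_pos (hgpos r hr) hrpos
    rwa [hgdef, div_mul_cancel₀ _ hrpos.ne'] at this
  refine ⟨⟨R₀, hR₀, hderiv_pos⟩, ?_⟩
  -- a is monotone on [R₀, ∞)
  have hmono : MonotoneOn a (Set.Ici R₀) := by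
    apply (strictMonoOn_of_deriv_pos (convex_Ici R₀) hadiff.continuous.continuousOn
      (fun r hr => by rw [interior_Ici] at hr; exact hderiv_pos r hr.le)).monotoneOn
  set b : ℝ → ℝ := fun r => a (max r R₀) with hbdef
  have hbmono : Monotone b := fun x y hxy =>
    hmono (mem_Ici.mpr (le_max_right _ _)) (mem_Ici.mpr (le_max_right _ _))
      (max_le_max hxy le_rfl)
  have hbb : BddAbove (Set.range b) := by
    refine ⟨1 / e₁, ?_⟩
    rintro _ ⟨r, rfl⟩
    exact (hbdd _ (hR₀.trans_le (le_max_right _ _))).2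
  have htend : Tendsto b atTop (nhds (⨆ r, b r)) := tendsto_atTop_ciSup hbmono hbb
  refine ⟨⨆ r, b r, ⟨?_, ?_⟩, ?_⟩
  · exact le_trans (hbdd _ (hR₀.trans_le (le_max_right R₀ R₀))).1 (le_ciSup hbb R₀)
  · exact ciSup_le fun r => (hbdd _ (hR₀.trans_le (le_max_right _ _))).2
  · apply htend.congr'
    filter_upwards [eventually_ge_atTop R₀] with r hr
    rw [hbdef]
    simp [max_eq_left hr]
end

section
/- Let $q : [R, \infty) \to \mathbb{R}$ be continuous with $q(r) \to \lambda^2$ as $r \to \infty$ for some $\lambda > 0$, and let $g \in C^2([R,\infty))$ be a bounded nonnegative solution of $g'' + \frac{g'}{r} = q(r) g$ with $g(r) \to 0$ as $r \to \infty$. Then for every $\varepsilon \in (0,1)$, $g(r) = O(e^{-\lambda(1-\varepsilon) r})$ as $r \to \infty$. -/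
open Filter Set Real

theorem stmt_19 (R lam : ℝ) (hlam : 0 < lam) (q g : ℝ → ℝ)
    (hq : ContinuousOn q (Set.Ici R))
    (hqlim : Filter.Tendsto q Filter.atTop (nhds (lam ^ 2)))
    (hg : ContDiffOn ℝ 2 g (Set.Ici R))
    (hbdd : ∃ K : ℝ, ∀ r ∈ Set.Ici R, |g r| ≤ K)
    (hpos : ∀ r ∈ Set.Ici R, 0 ≤ g r)
    (heq : ∀ r ∈ Set.Ioi R, deriv (deriv g) r + deriv g r / r = q r * g r)
    (hlim : Filter.Tendsto g Filter.atTop (nhds 0)) :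
    ∀ ε ∈ Set.Ioo (0 : ℝ) 1, ∃ C > (0 : ℝ), ∃ R' : ℝ, ∀ r ≥ R',
      g r ≤ C * Real.exp (-lam * (1 - ε) * r) := by
  intro ε hε
  obtain ⟨μ, hμdef⟩ : ∃ μ : ℝ, μ = lam * (1 - ε) := ⟨_, rfl⟩
  have hμ : 0 < μ := by rw [hμdef]; exact mul_pos hlam (by linarith [hε.2])
  have hμlam : μ < lam := by rw [hμdef]; nlinarith [hε.1, hε.2]
  have hμlt : μ ^ 2 < lam ^ 2 := by nlinarith
  -- threshold where q > μ²
  obtain ⟨R1, hR1⟩ := (Filter.eventually_atTop.1 (hqlim.eventually (lt_mem_nhds hμlt)))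
  obtain ⟨R0, hR0def⟩ : ∃ R0 : ℝ, R0 = max R1 (max R 0) + 1 := ⟨_, rfl⟩
  have hR0R : R < R0 := by
    have h1 : R ≤ max R 0 := le_max_left R 0
    have h2 : max R 0 ≤ max R1 (max R 0) := le_max_right _ _
    rw [hR0def]; linarith
  have hR0pos : 0 < R0 := by
    have h1 : (0:ℝ) ≤ max R 0 := le_max_right R 0
    have h2 : max R 0 ≤ max R1 (max R 0) := le_max_right _ _
    rw [hR0def]; linarith
  have hqge : ∀ r, R0 ≤ r → μ ^ 2 < q r := by
    intro r hr
    have h1 : R1 ≤ max R1 (max R 0) := le_max_left _ _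
    exact hR1 r (by rw [hR0def] at hr; linarith)
  obtain ⟨C, hCdef⟩ : ∃ C : ℝ, C = g R0 * Real.exp (μ * R0) + 1 := ⟨_, rfl⟩
  have hC : 0 < C := by
    have h1 := hpos R0 (le_of_lt hR0R)
    have h2 := Real.exp_pos (μ * R0)
    rw [hCdef]; positivity
  obtain ⟨w, hwdef⟩ : ∃ w : ℝ → ℝ, w = fun r => g r - C * Real.exp (-(μ * r)) :=
    ⟨_, rfl⟩
  have hwapp : ∀ r, w r = g r - C * Real.exp (-(μ * r)) := fun r => by rw [hwdef]
  -- w tends to 0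
  have hexp : Tendsto (fun r : ℝ => C * Real.exp (-(μ * r))) atTop (nhds 0) := by
    have h1 : Tendsto (fun r : ℝ => μ * r) atTop atTop :=
      Tendsto.const_mul_atTop hμ tendsto_id
    have h2 : Tendsto (fun r : ℝ => -(μ * r)) atTop atBot :=
      tendsto_neg_atTop_atBot.comp h1
    have h3 : Tendsto (fun r : ℝ => Real.exp (-(μ * r))) atTop (nhds 0) :=
      Real.tendsto_exp_atBot.comp h2
    simpa using h3.const_mul C
  have hwlim : Tendsto w atTop (nhds 0) := by
    rw [hwdef]; simpa using hlim.sub hexp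
  -- continuity of w on sets above R
  have hwcont : ∀ s : Set ℝ, s ⊆ Set.Ici R → ContinuousOn w s := by
    intro s hs
    rw [hwdef]
    apply ContinuousOn.sub (hg.continuousOn.mono hs)
    exact (continuous_const.mul (Real.continuous_exp.comp
      ((continuous_const.mul continuous_id).neg))).continuousOn
  -- differentiability facts on Ioi R
  have hgS : ContDiffOn ℝ 2 g (Set.Ioi R) := hg.mono Set.Ioi_subset_Ici_self
  have hgdiff : ∀ x ∈ Set.Ioi R, DifferentiableAt ℝ g x := fun x hx =>
    (hgS.contDiffAt (isOpen_Ioi.mem_nhds hx)).differentiableAt (by norm_num)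
  have hg'S : ContDiffOn ℝ 1 (deriv g) (Set.Ioi R) :=
    hgS.deriv_of_isOpen (m := 1) isOpen_Ioi (by norm_num)
  have hg'diff : ∀ x ∈ Set.Ioi R, DifferentiableAt ℝ (deriv g) x := fun x hx =>
    (hg'S.contDiffAt (isOpen_Ioi.mem_nhds hx)).differentiableAt (by norm_num)
  -- pointwise derivative of w
  obtain ⟨dw, hdwdef⟩ : ∃ dw : ℝ → ℝ,
      dw = fun x => deriv g x + C * μ * Real.exp (-(μ * x)) := ⟨_, rfl⟩
  have hdwapp : ∀ x, dw x = deriv g x + C * μ * Real.exp (-(μ * x)) := fun x => by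
    rw [hdwdef]
  have hwderiv : ∀ x ∈ Set.Ioi R, HasDerivAt w (dw x) x := by
    intro x hx
    have h1 : HasDerivAt g (deriv g x) x := (hgdiff x hx).hasDerivAt
    have h2 : HasDerivAt (fun r : ℝ => -(μ * r)) (-μ) x := by
      simpa using ((hasDerivAt_id x).const_mul μ).fun_neg
    have h3 : HasDerivAt (fun r : ℝ => C * Real.exp (-(μ * r)))
        (C * (Real.exp (-(μ * x)) * (-μ))) x := (h2.exp).const_mul C
    have h4 := h1.fun_sub h3
    rw [hwdef]
    refine h4.congr_deriv ?_
    rw [hdwapp]; ring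
  -- main claim
  have key : ∀ r, R0 ≤ r → w r ≤ 0 := by
    intro r₁ hr₁
    by_contra hcon
    push_neg at hcon
    obtain ⟨m, hmdef⟩ : ∃ m : ℝ, m = w r₁ := ⟨_, rfl⟩
    have hm : 0 < m := hmdef ▸ hcon
    obtain ⟨T, hT⟩ := Filter.eventually_atTop.1 (hwlim.eventually
      (eventually_lt_nhds (by linarith : (0:ℝ) < m / 2)))
    obtain ⟨T', hT'def⟩ : ∃ T' : ℝ, T' = max T r₁ := ⟨_, rfl⟩
    have hr₁T' : r₁ ≤ T' := hT'def ▸ le_max_right _ _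
    have hTT' : T ≤ T' := hT'def ▸ le_max_left _ _
    have hR0T' : R0 ≤ T' := le_trans hr₁ hr₁T'
    obtain ⟨rs, hrsmem, hrsmax⟩ := (isCompact_Icc).exists_isMaxOn
      (Set.nonempty_Icc.2 hR0T')
      (hwcont _ (fun x hx => le_trans (le_of_lt hR0R) hx.1))
    have hwrs : m ≤ w rs := hmdef ▸ hrsmax ⟨hr₁, hr₁T'⟩
    have hwR0 : w R0 < 0 := by
      have hCE : C * Real.exp (-(μ * R0)) = g R0 + Real.exp (-(μ * R0)) := by
        rw [hCdef, add_mul, one_mul, mul_assoc, ← Real.exp_add]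
        simp
      rw [hwapp, hCE]
      have := Real.exp_pos (-(μ * R0))
      linarith
    have hrsR0 : R0 < rs := by
      rcases lt_or_eq_of_le hrsmem.1 with h | h
      · exact h
      · exfalso; rw [← h] at hwrs; linarith
    have hglobal : ∀ r, R0 ≤ r → w r ≤ w rs := by
      intro r hr
      rcases le_or_gt r T' with h | h
      · exact hrsmax ⟨hr, h⟩
      · have := hT r (le_trans hTT' (le_of_lt h))
        linarith
    have hrsIoi : rs ∈ Set.Ioi R := lt_trans hR0R hrsR0
    have hrspos : 0 < rs := lt_trans hR0pos hrsR0
    -- local max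
    have hlocmax : IsLocalMax w rs := by
      apply Filter.eventually_of_mem (isOpen_Ioi.mem_nhds (Set.mem_Ioi.2 hrsR0))
      exact fun x hx => hglobal x (le_of_lt hx)
    have hderiv0 : deriv w rs = 0 := hlocmax.deriv_eq_zero
    have hwrs_deriv : deriv w rs = dw rs := (hwderiv rs hrsIoi).deriv
    have hdw0 : dw rs = 0 := by rw [← hwrs_deriv, hderiv0]
    -- second derivative
    obtain ⟨E, hEdef⟩ : ∃ E : ℝ, E = Real.exp (-(μ * rs)) := ⟨_, rfl⟩
    have hEpos : 0 < E := hEdef ▸ Real.exp_pos _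
    obtain ⟨c, hcdef⟩ : ∃ c : ℝ, c = deriv (deriv g) rs - C * μ ^ 2 * E := ⟨_, rfl⟩
    have hdwderiv : HasDerivAt dw c rs := by
      have h1 : HasDerivAt (deriv g) (deriv (deriv g) rs) rs :=
        (hg'diff rs hrsIoi).hasDerivAt
      have h2 : HasDerivAt (fun r : ℝ => -(μ * r)) (-μ) rs := by
        simpa using ((hasDerivAt_id rs).const_mul μ).fun_neg
      have h3 : HasDerivAt (fun r : ℝ => C * μ * Real.exp (-(μ * r)))
          (C * μ * (Real.exp (-(μ * rs)) * (-μ))) rs := (h2.exp).const_mul (C * μ)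
      have h4 := h1.fun_add h3
      rw [hdwdef]
      refine h4.congr_deriv ?_
      rw [hcdef, hEdef]; ring
    have hderivw_eq : deriv w =ᶠ[nhds rs] dw := by
      apply Filter.eventually_of_mem (isOpen_Ioi.mem_nhds hrsIoi)
      exact fun x hx => (hwderiv x hx).deriv
    have hdd : HasDerivAt (deriv w) c rs := hdwderiv.congr_of_eventuallyEq hderivw_eq
    -- c > 0
    have hwpos : 0 < g rs - C * E := by
      have h1 : w rs = g rs - C * E := by rw [hwapp, hEdef]
      linarith
    have hgrs : 0 ≤ g rs := hpos rs (Set.mem_Ici.2 (le_of_lt hrsIoi))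
    have hqrs : μ ^ 2 < q rs := hqge rs (le_of_lt hrsR0)
    have hcpos : 0 < c := by
      have heqrs := heq rs hrsIoi
      have hdg : deriv g rs = -(C * μ * E) := by
        rw [hdwapp, ← hEdef] at hdw0
        linarith
      rw [hdg] at heqrs
      have hdiv : 0 < C * μ * E / rs := div_pos (by positivity) hrspos
      have h2 : deriv (deriv g) rs = q rs * g rs + C * μ * E / rs := by
        rw [← heqrs]; ring
      rw [hcdef, h2]
      nlinarith [mul_le_mul_of_nonneg_right (le_of_lt hqrs) hgrs]
    -- w strictly increasing just right of rs: contradiction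
    rw [hasDerivAt_iff_tendsto_slope] at hdd
    have hslope : ∀ᶠ x in nhdsWithin rs {rs}ᶜ, 0 < slope (deriv w) rs x :=
      hdd.eventually (lt_mem_nhds hcpos)
    have hslope' : ∀ᶠ x in nhdsWithin rs (Set.Ioi rs), 0 < slope (deriv w) rs x :=
      hslope.filter_mono (nhdsWithin_mono _ (fun x hx => ne_of_gt hx))
    obtain ⟨u, hu, hsub⟩ := mem_nhdsGT_iff_exists_Ioo_subset.1 hslope'
    have hub : rs < u := hu
    have hderivpos : ∀ x ∈ Set.Ioo rs u, 0 < deriv w x := by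
      intro x hx
      have h5 := hsub hx
      rw [Set.mem_setOf_eq, slope_def_field, hderiv0, sub_zero] at h5
      have hx1 : 0 < x - rs := by have := hx.1; simp at this ⊢; linarith
      have h6 := mul_pos h5 hx1
      rwa [div_mul_cancel₀ _ (ne_of_gt hx1)] at h6
    have hmono : StrictMonoOn w (Set.Icc rs u) := by
      apply strictMonoOn_of_deriv_pos (convex_Icc rs u)
      · exact hwcont _ (fun x hx => le_trans (le_of_lt (lt_trans hR0R hrsR0)) hx.1)
      · intro x hx
        rw [interior_Icc] at hx
        exact hderivpos x hx
    have hmid : rs < (rs + u) / 2 := by linarith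
    have hmid2 : (rs + u) / 2 < u := by linarith
    have h7 := hmono (Set.left_mem_Icc.2 (le_of_lt hub))
      ⟨le_of_lt hmid, le_of_lt hmid2⟩ hmid
    have h8 := hglobal ((rs + u) / 2) (by linarith)
    linarith
  refine ⟨C, hC, R0, fun r hr => ?_⟩
  have h9 := key r hr
  rw [hwapp] at h9
  have hexpeq : -lam * (1 - ε) * r = -(μ * r) := by rw [hμdef]; ring
  rw [hexpeq]
  linarith
end
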